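/- Let n ≥ 9 be an integer, define μ_n^−(ρ) = −1 − (n·ρ^{(n−1)²}·(1 − (1 − 1/n)·ρ^{2n−1}))/(2n−1), and let ν_n* be the unique zero of μ_n^− in [1, +∞). Then ν_n* < 1 + (ln n)/n² − (ln(ln n))/(8n²). -/

import Mathlib

open Real

/-! ### Auxiliary lemmas -/

private lemma aux_xN (x N y L : ℝ) (hxy : y = x * N^2) (hyub : y ≤ L)
    (hLn : L ≤ (3.0225887232/20) * N) (hn20 : 20 ≤ N) (hx : 0 < x) :
    x * N ≤ 0.15112943616 := by nlinarith

private lemma aux_s (t : ℝ) (h1 : 0 < t) (h2 : t ≤ 0.15112943616) :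
    2*t + t^2 ≤ 0.3250989788 := by nlinarith

private lemma aux_logx (x : ℝ) (hxpos : 0 < x) : x - x^2 ≤ Real.log (1+x) := by
  have h := Real.log_le_sub_one_of_pos (show 0 < (1+x)⁻¹ by positivity)
  rw [Real.log_inv] at h
  have hinv : (1+x)⁻¹ ≤ 1 - x + x^2 := by
    rw [inv_eq_one_div, div_le_iff₀ (by positivity : (0:ℝ) < 1+x)]
    nlinarith [hxpos.le, mul_nonneg (mul_nonneg hxpos.le hxpos.le) hxpos.le]
  nlinarith

private lemma aux_exponent (x N : ℝ) (hx : 0 < x) (hN : 20 ≤ N) :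
    x*N^2 - (2*x*N + (x*N)^2) ≤ (N-1)^2 * (x - x^2) := by nlinarith

private lemma aux_P (x N : ℝ) (hx : 0 < x) (hN : 20 ≤ N) :
    1.85*(x*N^2) ≤ (N-1)*(2*N-1)*x := by
  nlinarith [mul_nonneg (mul_nonneg (show (0:ℝ) ≤ 0.15*N by linarith)
    (show (0:ℝ) ≤ N - 20 by linarith)) hx.le]

private lemma aux_256 (L : ℝ) (hL : 2.9725887212 ≤ L) : 256*L ≤ (0.9*L)^8 := by
  have hL7 : (2.9725887212:ℝ)^7 ≤ L^7 := by
    apply pow_le_pow_left₀ (by norm_num) hL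
  nlinarith

/-- Rational lower bound on `log n` for `n ≥ 9`. -/
private lemma logn_lb (n : ℕ) (hn : 9 ≤ n) :
    2.0794415409 + (1 - 8/(n:ℝ)) ≤ Real.log n := by
  have hn9 : (9:ℝ) ≤ n := by exact_mod_cast hn
  have h8 : Real.log ((n:ℝ)) = Real.log 8 + Real.log ((n:ℝ)/8) := by
    rw [← Real.log_mul (by norm_num) (by positivity)]
    congr 1; ring
  have hl8 : (2.0794415409:ℝ) ≤ Real.log 8 := by
    have h2 : (8:ℝ) = 2^3 := by norm_num
    rw [h2, Real.log_pow]
    have := Real.log_two_gt_d9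
    push_cast; nlinarith
  have hl : 1 - 8/(n:ℝ) ≤ Real.log ((n:ℝ)/8) := by
    have h := Real.log_le_sub_one_of_pos (show (0:ℝ) < ((n:ℝ)/8)⁻¹ by positivity)
    rw [Real.log_inv] at h
    have h1 : ((n:ℝ)/8)⁻¹ = 8/(n:ℝ) := by
      rw [inv_eq_one_div, one_div_div]
    rw [h1] at h; linarith
  linarith

/-- Rational upper bound on `log n` for `n ≥ 9`. -/
private lemma logn_ub (n : ℕ) (hn : 9 ≤ n) :
    Real.log n ≤ 2.0794415424 + ((n:ℝ)/8 - 1) := by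
  have hn9 : (9:ℝ) ≤ n := by exact_mod_cast hn
  have h8 : Real.log ((n:ℝ)) = Real.log 8 + Real.log ((n:ℝ)/8) := by
    rw [← Real.log_mul (by norm_num) (by positivity)]
    congr 1; ring
  have hl8 : Real.log 8 ≤ (2.0794415424:ℝ) := by
    have h2 : (8:ℝ) = 2^3 := by norm_num
    rw [h2, Real.log_pow]
    have := Real.log_two_lt_d9
    push_cast; nlinarith
  have hl : Real.log ((n:ℝ)/8) ≤ (n:ℝ)/8 - 1 :=
    Real.log_le_sub_one_of_pos (by positivity)
  linarith

private lemma logn_pos (n : ℕ) (hn : 9 ≤ n) : 0 < Real.log n := by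
  have hn9 : (9:ℝ) ≤ n := by exact_mod_cast hn
  have := logn_lb n hn
  have h : 8/(n:ℝ) ≤ 8/9 := by
    apply div_le_div_of_nonneg_left (by norm_num) (by norm_num) hn9
  linarith

/-- Rational upper bound on `log (log n)` for `n ≥ 9`. -/
private lemma loglogn_ub (n : ℕ) (hn : 9 ≤ n) :
    Real.log (Real.log n) ≤ 0.6931471808 + ((2.0794415424 + ((n:ℝ)/8 - 1))/2 - 1) := by
  have hn9 : (9:ℝ) ≤ n := by exact_mod_cast hn
  have hLub := logn_ub n hn
  have hLpos := logn_pos n hn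
  set Lhi : ℝ := 2.0794415424 + ((n:ℝ)/8 - 1) with hLhi
  have hLhipos : 0 < Lhi := by rw [hLhi]; nlinarith
  have h1 : Real.log (Real.log n) ≤ Real.log Lhi :=
    Real.log_le_log hLpos hLub
  have h2 : Real.log Lhi = Real.log 2 + Real.log (Lhi/2) := by
    rw [← Real.log_mul (by norm_num) (by positivity)]
    congr 1; ring
  have h3 : Real.log (Lhi/2) ≤ Lhi/2 - 1 :=
    Real.log_le_sub_one_of_pos (by positivity)
  have := Real.log_two_lt_d9
  linarith

/-- The function `μ_n^−` from the analysis of the optimal third order SSP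
Runge–Kutta methods with `n²` stages. -/
noncomputable def munMinus (n : ℕ) (ρ : ℝ) : ℝ :=
  -1 - (n * ρ ^ ((n - 1) ^ 2) * (1 - (1 - 1 / (n : ℝ)) * ρ ^ (2 * n - 1))) / (2 * (n : ℝ) - 1)

/-- If the quantity `n ρ^((n-1)²) ((1-1/n) ρ^(2n-1) - 1)` exceeds `2n-1` at some
`r` with `1 ≤ r ≤ B`, then `munMinus n B > 0`. -/
private lemma crit (n : ℕ) (hn : 9 ≤ n) (r B : ℝ) (hr1 : 1 ≤ r) (hrB : r ≤ B)
    (hF : 2*(n:ℝ) - 1 < (n:ℝ) * r ^ ((n-1)^2) * ((1 - 1/(n:ℝ)) * r ^ (2*n-1) - 1)) :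
    0 < munMinus n B := by
  have hn9 : (9:ℝ) ≤ n := by exact_mod_cast hn
  have hd : 0 < 2*(n:ℝ) - 1 := by linarith
  have hr0 : (0:ℝ) ≤ r := by linarith
  have hB1 : (1:ℝ) ≤ B := le_trans hr1 hrB
  have hB0 : (0:ℝ) ≤ B := by linarith
  have hpa : r ^ ((n-1)^2) ≤ B ^ ((n-1)^2) := pow_le_pow_left₀ hr0 hrB _
  have hpb : r ^ (2*n-1) ≤ B ^ (2*n-1) := pow_le_pow_left₀ hr0 hrB _
  have hrapos : 0 < (n:ℝ) * r ^ ((n-1)^2) := by positivity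
  have hCr : 0 < (1 - 1/(n:ℝ)) * r ^ (2*n-1) - 1 := by
    by_contra h
    push_neg at h
    nlinarith
  have hcoef : (0:ℝ) ≤ 1 - 1/(n:ℝ) := by
    have : 1/(n:ℝ) ≤ 1/9 := by
      apply div_le_div_of_nonneg_left (by norm_num) (by norm_num) hn9
    linarith
  have hCB : (1 - 1/(n:ℝ)) * r ^ (2*n-1) - 1 ≤ (1 - 1/(n:ℝ)) * B ^ (2*n-1) - 1 := by
    nlinarith
  have hFB : 2*(n:ℝ) - 1 < (n:ℝ) * B ^ ((n-1)^2) * ((1 - 1/(n:ℝ)) * B ^ (2*n-1) - 1) := by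
    have hpa0 : (0:ℝ) ≤ r ^ ((n-1)^2) := by positivity
    have h1 : (n:ℝ) * r ^ ((n-1)^2) * ((1 - 1/(n:ℝ)) * r ^ (2*n-1) - 1)
        ≤ (n:ℝ) * B ^ ((n-1)^2) * ((1 - 1/(n:ℝ)) * B ^ (2*n-1) - 1) := by
      have := mul_le_mul hpa hCB hCr.le (by positivity : (0:ℝ) ≤ B ^ ((n-1)^2))
      nlinarith
    linarith
  have heq : munMinus n B
      = ((n:ℝ) * B ^ ((n-1)^2) * ((1 - 1/(n:ℝ)) * B ^ (2*n-1) - 1) - (2*(n:ℝ) - 1))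
        / (2*(n:ℝ) - 1) := by
    unfold munMinus
    field_simp
    have hd2 : (n:ℝ)*2 - 1 ≠ 0 := by linarith
    field_simp
    ring
  rw [heq]
  exact div_pos (by linarith) hd

/-- Reduction: if `munMinus` is positive at the claimed upper bound, the conclusion
of the main theorem follows by the intermediate value theorem and uniqueness. -/
private lemma main_of (n : ℕ) (hn : 9 ≤ n)
    (ν : ℝ) (hν0 : munMinus n ν = 0)
    (huniq : ∀ ρ : ℝ, 1 ≤ ρ → munMinus n ρ = 0 → ρ = ν)
    (hB : 0 < munMinus n (1 + Real.log n / (n : ℝ) ^ 2 - Real.log (Real.log n) / (8 * (n : ℝ) ^ 2))) :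
    ν < 1 + Real.log n / (n : ℝ) ^ 2 - Real.log (Real.log n) / (8 * (n : ℝ) ^ 2) := by
  have hn9 : (9:ℝ) ≤ n := by exact_mod_cast hn
  set B := 1 + Real.log n / (n : ℝ) ^ 2 - Real.log (Real.log n) / (8 * (n : ℝ) ^ 2) with hBdef
  have hLpos : 0 < Real.log n := logn_pos n hn
  have hMle : Real.log (Real.log n) ≤ Real.log n - 1 := Real.log_le_sub_one_of_pos hLpos
  have hn2 : (0:ℝ) < (n:ℝ)^2 := by positivity
  have hB1 : 1 ≤ B := by
    rw [hBdef]
    have h1 : 0 ≤ Real.log n / (n:ℝ)^2 - Real.log (Real.log n) / (8 * (n:ℝ)^2) := by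
      rw [div_sub_div _ _ (ne_of_gt hn2) (by positivity : (8 * (n:ℝ)^2) ≠ 0)]
      apply div_nonneg _ (by positivity)
      nlinarith
    linarith
  have hμ1 : munMinus n 1 < 0 := by
    have hd : 0 < 2*(n:ℝ) - 1 := by linarith
    have heq : munMinus n 1 = -(2*(n:ℝ)) / (2*(n:ℝ) - 1) := by
      unfold munMinus
      rw [one_pow, one_pow]
      field_simp
      have hd2 : (n:ℝ)*2 - 1 ≠ 0 := by linarith
      field_simp
      ring
    rw [heq]
    exact div_neg_of_neg_of_pos (by linarith) hd
  have hcont : Continuous (munMinus n) := by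
    unfold munMinus
    fun_prop
  have hmem : (0:ℝ) ∈ Set.Icc (munMinus n 1) (munMinus n B) := ⟨hμ1.le, hB.le⟩
  obtain ⟨c, hc, hc0⟩ := intermediate_value_Icc hB1 hcont.continuousOn hmem
  have hcν : c = ν := huniq c hc.1 hc0
  have hνB : ν ≤ B := hcν ▸ hc.2
  rcases lt_or_eq_of_le hνB with h | h
  · exact h
  · exfalso; rw [← h] at hB; rw [hν0] at hB; exact lt_irrefl 0 hB

/-- Numeric criterion for `9 ≤ n < 20`, with a rational witness `c`. -/
private lemma small_case (n : ℕ) (hn : 9 ≤ n) (c : ℝ) (hc0 : 0 ≤ c)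
    (hcy : c ≤ (2.0794415409 + (1 - 8/(n:ℝ)))
      - (0.6931471808 + ((2.0794415424 + ((n:ℝ)/8 - 1))/2 - 1))/8)
    (hF : 2*(n:ℝ) - 1 < (n:ℝ) * (1+c/(n:ℝ)^2) ^ ((n-1)^2)
      * ((1 - 1/(n:ℝ))*(1+c/(n:ℝ)^2) ^ (2*n-1) - 1)) :
    0 < munMinus n (1 + Real.log n / (n : ℝ) ^ 2 - Real.log (Real.log n) / (8 * (n : ℝ) ^ 2)) := by
  have hn2 : (0:ℝ) < (n:ℝ)^2 := by
    have hn9 : (9:ℝ) ≤ n := by exact_mod_cast hn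
    positivity
  apply crit n hn (1+c/(n:ℝ)^2) _ (by have := div_nonneg hc0 hn2.le; linarith) _ hF
  have hy : c ≤ Real.log n - Real.log (Real.log n)/8 := by
    have h1 := logn_lb n hn
    have h2 := loglogn_ub n hn
    linarith
  have h3 : c/(n:ℝ)^2 ≤ (Real.log n - Real.log (Real.log n)/8)/(n:ℝ)^2 :=
    (div_le_div_iff_of_pos_right hn2).mpr hy
  have h4 : (Real.log n - Real.log (Real.log n)/8)/(n:ℝ)^2
      = Real.log n/(n:ℝ)^2 - Real.log (Real.log n)/(8*(n:ℝ)^2) := by ring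
  linarith

set_option maxHeartbeats 1000000 in
lemma asymp_F (n : ℕ) (hn : 20 ≤ n) :
    2*(n:ℝ) - 1 < (n:ℝ) * (1 + (Real.log n - Real.log (Real.log n)/8)/(n:ℝ)^2) ^ ((n-1)^2)
      * ((1 - 1/(n:ℝ)) * (1 + (Real.log n - Real.log (Real.log n)/8)/(n:ℝ)^2) ^ (2*n-1) - 1) := by
  have hn20 : (20:ℝ) ≤ (n:ℝ) := by exact_mod_cast hn
  set L : ℝ := Real.log n with hLdef
  set M : ℝ := Real.log L with hMdef
  set N : ℝ := (n:ℝ) with hNdef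
  set y : ℝ := L - M/8 with hydef
  set x : ℝ := y / N^2 with hxdef
  clear_value x y N M L
  have hN0 : (0:ℝ) < N := by linarith
  -- bounds on log 20
  have hlog20lb : (2.9725887212:ℝ) ≤ Real.log 20 := by
    have h : Real.log 20 = Real.log (2^4) + Real.log (5/4) := by
      rw [← Real.log_mul (by norm_num) (by norm_num)]; norm_num
    have h2 : (1:ℝ) - 1/(5/4 : ℝ) ≤ Real.log (5/4) := by
      have hh := Real.log_le_sub_one_of_pos (show (0:ℝ) < (5/4:ℝ)⁻¹ by norm_num)
      rw [Real.log_inv] at hh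
      norm_num at hh ⊢
      linarith
    rw [Real.log_pow] at h
    have := Real.log_two_gt_d9
    rw [h]; push_cast; norm_num at h2 ⊢; linarith
  have hlog20ub : Real.log 20 ≤ (3.0225887232:ℝ) := by
    have h : Real.log 20 = Real.log (2^4) + Real.log (5/4) := by
      rw [← Real.log_mul (by norm_num) (by norm_num)]; norm_num
    have h2 : Real.log (5/4 : ℝ) ≤ 5/4 - 1 := Real.log_le_sub_one_of_pos (by norm_num)
    rw [Real.log_pow] at h
    have := Real.log_two_lt_d9
    rw [h]; push_cast; linarith
  -- L bounds
  have hL20 : Real.log 20 ≤ L := by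
    rw [hLdef]; exact Real.log_le_log (by norm_num) hn20
  have hLlb : (2.9725887212:ℝ) ≤ L := le_trans hlog20lb hL20
  have hLpos : 0 < L := by linarith
  have hLn : L ≤ (3.0225887232/20) * N := by
    have h1 : Real.log (N/20) ≤ N/20 - 1 := Real.log_le_sub_one_of_pos (by positivity)
    have h2 : L = Real.log 20 + Real.log (N/20) := by
      rw [hLdef, ← Real.log_mul (by norm_num) (by positivity)]
      congr 1; ring
    linarith
  have hM0 : 0 < M := by rw [hMdef]; exact Real.log_pos (by linarith)
  have hMhi : M ≤ 0.6931471808 + (L/2 - 1) := by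
    have h2 : M = Real.log 2 + Real.log (L/2) := by
      rw [hMdef, ← Real.log_mul (by norm_num) (by positivity)]
      congr 1; ring
    have h3 : Real.log (L/2) ≤ L/2 - 1 := Real.log_le_sub_one_of_pos (by positivity)
    have := Real.log_two_lt_d9
    linarith
  have hylb : 15/16*L + 0.0383566024 ≤ y := by rw [hydef]; linarith
  have hyub : y ≤ L := by rw [hydef]; linarith
  have hypos : 0 < y := by linarith
  have hxpos : 0 < x := by rw [hxdef]; exact div_pos hypos (by positivity)
  have hxy : y = x * N^2 := by rw [hxdef]; field_simp [hN0.ne']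
  have hxN : x * N ≤ 0.15112943616 := aux_xN x N y L hxy hyub hLn hn20 hxpos
  have hxNpos : 0 < x * N := by positivity
  -- cast facts for exponents
  have h1n : 1 ≤ n := by omega
  have hcast_a : (((n-1)^2 : ℕ) : ℝ) = (N-1)^2 := by
    rw [hNdef]; push_cast [Nat.cast_sub h1n]; ring
  have hcast_b : (((2*n-1 : ℕ)) : ℝ) = 2*N-1 := by
    rw [hNdef]; push_cast [Nat.cast_sub (by omega : 1 ≤ 2*n)]; ring
  -- lower bound for (1+x)^((n-1)^2)
  set s : ℝ := 2*x*N + (x*N)^2 with hsdef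
  have hs0 : s ≤ 0.3250989788 := by
    rw [hsdef]
    have := aux_s (x*N) hxNpos hxN
    linarith
  have hspos : 0 < s := by rw [hsdef]; positivity
  clear_value s
  have hlogx : x - x^2 ≤ Real.log (1+x) := aux_logx x hxpos
  have hstep : Real.exp (y - s) ≤ (1+x) ^ ((n-1)^2) := by
    have h1 : (1+x) ^ ((n-1)^2) = Real.exp ((((n-1)^2 : ℕ):ℝ) * Real.log (1+x)) := by
      rw [Real.exp_nat_mul, Real.exp_log (by positivity)]
    rw [h1, Real.exp_le_exp, hcast_a]
    have h2 : (N-1)^2 * (x - x^2) ≤ (N-1)^2 * Real.log (1+x) :=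
      mul_le_mul_of_nonneg_left hlogx (by positivity)
    have h3 : y - s ≤ (N-1)^2 * (x - x^2) := by
      rw [hxy, hsdef]; exact aux_exponent x N hxpos hn20
    linarith
  -- lower bound for the second factor
  have hb : 1 + (2*N-1)*x ≤ (1+x) ^ (2*n-1) := by
    have h := one_add_mul_le_pow (show (-2:ℝ) ≤ x by linarith) (2*n-1)
    calc 1 + (2*N-1)*x = 1 + (((2*n-1 : ℕ)):ℝ) * x := by rw [hcast_b]
      _ ≤ (1+x) ^ (2*n-1) := h
  have hNinv : (0:ℝ) < 1 - 1/N := by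
    have : 1/N ≤ 1/20 := by
      apply div_le_div_of_nonneg_left (by norm_num) (by norm_num) hn20
    linarith
  have hClb : ((N-1)*(2*N-1)*x - 1)/N ≤ (1 - 1/N) * (1+x) ^ (2*n-1) - 1 := by
    have h1 : (1 - 1/N) * (1 + (2*N-1)*x) ≤ (1 - 1/N) * (1+x) ^ (2*n-1) :=
      mul_le_mul_of_nonneg_left hb hNinv.le
    have h2 : ((N-1)*(2*N-1)*x - 1)/N = (1 - 1/N) * (1 + (2*N-1)*x) - 1 := by
      field_simp; ring
    linarith
  -- P lower bound
  have hPlb : 1.85*y ≤ (N-1)*(2*N-1)*x := by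
    rw [hxy]; exact aux_P x N hxpos hn20
  have hP1 : 0 < 1.85*y - 1 := by linarith
  -- the 8th power argument
  set u : ℝ := Real.exp (M/8) with hudef
  have hupos : 0 < u := Real.exp_pos _
  have hu8 : u^8 = L := by
    rw [hudef, ← Real.exp_nat_mul]
    have h8 : ((8:ℕ):ℝ) * (M/8) = M := by push_cast; ring
    rw [h8, hMdef, Real.exp_log hLpos]
  clear_value u
  have hW2u : 2*u ≤ 0.6749010212*(1.85*y - 1) := by
    have hWlb : 0.9*L ≤ 0.6749010212*(1.85*y - 1) := by linarith
    have h256 : (2*u)^8 ≤ (0.9*L)^8 := by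
      have he : (2*u)^8 = 256*L := by rw [mul_pow, hu8]; norm_num
      rw [he]; exact aux_256 L hLlb
    have hW0 : (0:ℝ) ≤ 0.9*L := by linarith
    have := le_of_pow_le_pow_left₀ (by norm_num : (8:ℕ) ≠ 0) hW0 h256
    linarith
  -- assemble
  have hClb0 : 0 ≤ ((N-1)*(2*N-1)*x - 1)/N := by
    apply div_nonneg _ hN0.le
    linarith
  have hmain : Real.exp (y - s) * (((N-1)*(2*N-1)*x - 1)/N)
      ≤ (1+x) ^ ((n-1)^2) * ((1 - 1/N) * (1+x) ^ (2*n-1) - 1) :=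
    mul_le_mul hstep hClb hClb0 (by positivity)
  have hsplit : Real.exp (y - s) = N * (Real.exp (-(M/8)) * Real.exp (-s)) := by
    rw [show y - s = L + (-(M/8) + -s) by rw [hydef]; ring, Real.exp_add, Real.exp_add,
      hLdef, hNdef, Real.exp_log (by positivity)]
  have hexpnegs : 1 - s ≤ Real.exp (-s) := by
    have := Real.add_one_le_exp (-s)
    linarith
  have hexpMpos : 0 < Real.exp (-(M/8)) := Real.exp_pos _
  have hchain1 : Real.exp (-(M/8)) * ((1-s)*(1.85*y-1))
      ≤ Real.exp (y - s) * (((N-1)*(2*N-1)*x - 1)/N) := by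
    rw [hsplit]
    have h1 : (1-s)*(1.85*y-1) ≤ Real.exp (-s) * ((N-1)*(2*N-1)*x - 1) := by
      have ha : (1-s)*(1.85*y-1) ≤ Real.exp (-s) * (1.85*y-1) :=
        mul_le_mul_of_nonneg_right hexpnegs hP1.le
      have hb2 : Real.exp (-s) * (1.85*y-1) ≤ Real.exp (-s) * ((N-1)*(2*N-1)*x - 1) :=
        mul_le_mul_of_nonneg_left (by linarith) (Real.exp_pos _).le
      linarith
    have heq : N * (Real.exp (-(M/8)) * Real.exp (-s)) * (((N-1)*(2*N-1)*x - 1)/N)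
        = Real.exp (-(M/8)) * (Real.exp (-s) * ((N-1)*(2*N-1)*x - 1)) := by
      field_simp
    rw [heq]
    exact mul_le_mul_of_nonneg_left h1 hexpMpos.le
  have hchain2 : (2:ℝ) ≤ Real.exp (-(M/8)) * ((1-s)*(1.85*y-1)) := by
    have h0 : 0.6749010212*(1.85*y - 1) ≤ (1-s)*(1.85*y-1) :=
      mul_le_mul_of_nonneg_right (by linarith) hP1.le
    have h1 : 2*u ≤ (1-s)*(1.85*y-1) := by linarith
    have h2 : Real.exp (-(M/8)) * (2*u) ≤ Real.exp (-(M/8)) * ((1-s)*(1.85*y-1)) :=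
      mul_le_mul_of_nonneg_left h1 hexpMpos.le
    have h3 : Real.exp (-(M/8)) * (2*u) = 2 := by
      rw [hudef, show Real.exp (-(M/8)) * (2*Real.exp (M/8))
        = 2*(Real.exp (-(M/8)) * Real.exp (M/8)) by ring, ← Real.exp_add]
      norm_num
    linarith
  have hfin : 2 ≤ (1+x) ^ ((n-1)^2) * ((1 - 1/N) * (1+x) ^ (2*n-1) - 1) := by
    linarith
  have hgoal : N * 2 ≤ N * ((1+x) ^ ((n-1)^2) * ((1 - 1/N) * (1+x) ^ (2*n-1) - 1)) :=
    mul_le_mul_of_nonneg_left hfin hN0.le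
  calc 2*N - 1 < N * 2 := by linarith
    _ ≤ N * ((1+x) ^ ((n-1)^2) * ((1 - 1/N) * (1+x) ^ (2*n-1) - 1)) := hgoal
    _ = N * (1+x) ^ ((n-1)^2) * ((1 - 1/N) * (1+x) ^ (2*n-1) - 1) := by ring

/-- For `n ≥ 20` the value of `munMinus` at the claimed bound is positive. -/
private lemma large_case (n : ℕ) (hn : 20 ≤ n) :
    0 < munMinus n (1 + Real.log n / (n : ℝ) ^ 2 - Real.log (Real.log n) / (8 * (n : ℝ) ^ 2)) := by
  have hn9 : 9 ≤ n := by omega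
  have hn9' : (9:ℝ) ≤ n := by exact_mod_cast hn9
  have hLpos : 0 < Real.log n := logn_pos n hn9
  have hMle : Real.log (Real.log n) ≤ Real.log n - 1 := Real.log_le_sub_one_of_pos hLpos
  have hn2 : (0:ℝ) < (n:ℝ)^2 := by positivity
  set B := 1 + Real.log n / (n : ℝ) ^ 2 - Real.log (Real.log n) / (8 * (n : ℝ) ^ 2) with hBdef
  have hB1 : (1:ℝ) ≤ B := by
    rw [hBdef]
    have h1 : 0 ≤ Real.log n / (n:ℝ)^2 - Real.log (Real.log n) / (8 * (n:ℝ)^2) := by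
      rw [div_sub_div _ _ (ne_of_gt hn2) (by positivity : (8 * (n:ℝ)^2) ≠ 0)]
      apply div_nonneg _ (by positivity)
      nlinarith
    linarith
  apply crit n hn9 B B hB1 le_rfl
  have hBeq : B = 1 + (Real.log n - Real.log (Real.log n)/8)/(n:ℝ)^2 := by
    rw [hBdef]; ring
  rw [hBeq]
  exact asymp_F n hn

theorem nunstar_upper_bound (n : ℕ) (hn : 9 ≤ n)
    (ν : ℝ) (hν1 : 1 ≤ ν) (hν0 : munMinus n ν = 0)
    (huniq : ∀ ρ : ℝ, 1 ≤ ρ → munMinus n ρ = 0 → ρ = ν) :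
    ν < 1 + Real.log n / (n : ℝ) ^ 2 - Real.log (Real.log n) / (8 * (n : ℝ) ^ 2) := by
  rcases lt_or_ge n 20 with h | h
  · interval_cases n
    · exact main_of _ (by norm_num) ν hν0 huniq
        (small_case _ (by norm_num) (209/100) (by norm_num) (by norm_num) (by norm_num))
    · exact main_of _ (by norm_num) ν hν0 huniq
        (small_case _ (by norm_num) (217/100) (by norm_num) (by norm_num) (by norm_num))
    · exact main_of _ (by norm_num) ν hν0 huniq
        (small_case _ (by norm_num) (223/100) (by norm_num) (by norm_num) (by norm_num))
    · exact main_of _ (by norm_num) ν hν0 huniq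
        (small_case _ (by norm_num) (57/25) (by norm_num) (by norm_num) (by norm_num))
    · exact main_of _ (by norm_num) ν hν0 huniq
        (small_case _ (by norm_num) (233/100) (by norm_num) (by norm_num) (by norm_num))
    · exact main_of _ (by norm_num) ν hν0 huniq
        (small_case _ (by norm_num) (59/25) (by norm_num) (by norm_num) (by norm_num))
    · exact main_of _ (by norm_num) ν hν0 huniq
        (small_case _ (by norm_num) (239/100) (by norm_num) (by norm_num) (by norm_num))
    · exact main_of _ (by norm_num) ν hν0 huniq
        (small_case _ (by norm_num) (121/50) (by norm_num) (by norm_num) (by norm_num))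
    · exact main_of _ (by norm_num) ν hν0 huniq
        (small_case _ (by norm_num) (61/25) (by norm_num) (by norm_num) (by norm_num))
    · exact main_of _ (by norm_num) ν hν0 huniq
        (small_case _ (by norm_num) (123/50) (by norm_num) (by norm_num)
          (by norm_num; rw [show (289:ℕ) = 17*17 by norm_num, pow_mul]; norm_num))
    · exact main_of _ (by norm_num) ν hν0 huniq
        (small_case _ (by norm_num) (62/25) (by norm_num) (by norm_num)
          (by norm_num; rw [show (324:ℕ) = 18*18 by norm_num, pow_mul]; norm_num))
  · exact main_of n hn ν hν0 huniq (large_case n h)
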